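/- Suppose the chemical reaction network satisfies the following reachability condition: defining S_0 := ∅ and S_k := S_{k−1} ∪ {j ∉ S_{k−1} : there exists r ∈ R with (c_out^r)_j > 0 and supp(c_in^r) ⊆ S_{k−1}}, the sets S_k exhaust {1,…,d} after finitely many steps. Then for every ρ > 0 there exist D ∈ ℕ and b > 0 such that every solution ζ : [0,1] → ℝ₊^d of the mass-action ODE ζ′(t) = Σ_{r∈R} λ_r(ζ(t)) c^r with sup_{t∈[0,1]} ‖ζ(t)‖₁ ≤ ρ satisfies ζ_i(t) ≥ b·t^D for all t ∈ [0,1] and all i = 1,…,d. -/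

import Mathlib

open Real Filter Finset Set MeasureTheory
open scoped Classical

noncomputable section

/-- A chemical reaction network on `d` species with `m` reactions. -/
structure CRN (d m : ℕ) where
  cin : Fin m → Fin d → ℕ
  cout : Fin m → Fin d → ℕ
  k : Fin m → ℝ
  k_pos : ∀ r, 0 < k r

namespace CRN

variable {d m : ℕ}

/-- The reaction vector `c^r = c_out^r - c_in^r`. -/
def cvec (N : CRN d m) (r : Fin m) : Fin d → ℝ := fun i => (N.cout r i : ℝ) - (N.cin r i : ℝ)

/-- Mass-action rate `λ_r`. -/
def lam (N : CRN d m) (r : Fin m) (x : Fin d → ℝ) : ℝ := N.k r * ∏ i, x i ^ (N.cin r i)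

/-- Volume-normalized jump rate `Λ_r^{(v)}`. -/
def jump (N : CRN d m) (v : ℝ) (r : Fin m) (x : Fin d → ℝ) : ℝ :=
  N.k r / v ^ (∑ i, N.cin r i) * ∏ i, ∏ l ∈ Finset.range (N.cin r i), (v * x i - (l : ℝ))

/-- Reactions whose input complex is `w`-maximal among all input complexes. -/
def Rw (N : CRN d m) (w : Fin d → ℝ) : Set (Fin m) :=
  {r | ∀ r', 0 ≤ ∑ i, w i * ((N.cin r i : ℝ) - (N.cin r' i : ℝ))}

/-- Strongly endotactic network. -/
def StronglyEndotactic (N : CRN d m) : Prop :=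
  ∀ w : Fin d → ℝ, w ≠ 0 →
    (∃ r ∈ N.Rw w, ∑ i, w i * N.cvec r i < 0) ∧
    ∀ r ∈ N.Rw w, ∑ i, w i * N.cvec r i ≤ 0

/-- A siphon. -/
def IsSiphon (N : CRN d m) (P : Finset (Fin d)) : Prop :=
  P.Nonempty ∧ ∀ r, (∃ i ∈ P, 0 < N.cout r i) → ∃ i ∈ P, 0 < N.cin r i

/-- Reactions with substrates only from `P`. -/
def RP (N : CRN d m) (P : Finset (Fin d)) : Set (Fin m) := {r | ∀ i ∉ P, N.cin r i = 0}

/-- Reactions of `R(P)` whose input complex is `w`-maximal within `R(P)`. -/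
def RPw (N : CRN d m) (P : Finset (Fin d)) (w : Fin d → ℝ) : Set (Fin m) :=
  {r | r ∈ N.RP P ∧ ∀ r' ∈ N.RP P, 0 ≤ ∑ i, w i * ((N.cin r i : ℝ) - (N.cin r' i : ℝ))}

/-- The products of reaction `r` lie in `P`. -/
def OutIn (N : CRN d m) (P : Finset (Fin d)) (r : Fin m) : Prop := ∀ i ∉ P, N.cout r i = 0

/-- `w`-dissipative reaction. -/
def Dissipative (N : CRN d m) (P : Finset (Fin d)) (w : Fin d → ℝ) (r : Fin m) : Prop :=
  ¬ N.OutIn P r ∨ ∑ i, w i * N.cvec r i < 0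

/-- `w`-explosive reaction. -/
def Explosive (N : CRN d m) (P : Finset (Fin d)) (w : Fin d → ℝ) (r : Fin m) : Prop :=
  N.OutIn P r ∧ 0 < ∑ i, w i * N.cvec r i

end CRN

/-- Chemical Lyapunov function `U(x) = d + 1 + ∑ x_i (log x_i - 1)`. -/
def U (n : ℕ) (x : Fin n → ℝ) : ℝ := n + 1 + ∑ i, x i * (Real.log (x i) - 1)

/-- Euclidean inner product. -/
def dot {n : ℕ} (a b : Fin n → ℝ) : ℝ := ∑ i, a i * b i

namespace CRN

variable {d m : ℕ}

/-- `h_r^{(v)}(x) = ⟨∇_r^{(v)} U(x), c^r⟩`. -/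
def hrv (N : CRN d m) (P : Finset (Fin d)) (v : ℝ) (r : Fin m) (x : Fin d → ℝ) : ℝ :=
  ∑ i, (if i ∈ P then Real.log (x i)
        else if N.cout r i ≠ 0 then Real.log (N.cvec r i / v) else 0) * N.cvec r i

/-- `Q_r^{(v)}(x) = (U(x + v⁻¹ c^r)/U(x))^v`. -/
def Qrv (N : CRN d m) (v : ℝ) (r : Fin m) (x : Fin d → ℝ) : ℝ :=
  (U d (fun i => x i + N.cvec r i / v) / U d x) ^ v

/-- `L_r^{(v)}(x) = U(x) (Q_r^{(v)}(x) - 1)`. -/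
def Lrv (N : CRN d m) (v : ℝ) (r : Fin m) (x : Fin d → ℝ) : ℝ :=
  U d x * (N.Qrv v r x - 1)

/-- The modified network `C_{u,P}`: outputs of reactions not in `R(P)_u` are restricted to `P`. -/
def modify (N : CRN d m) (P : Finset (Fin d)) (u : Fin d → ℝ) : CRN d m where
  cin := N.cin
  cout := fun r i => if i ∈ P ∨ r ∈ N.RPw P u then N.cout r i else 0
  k := N.k
  k_pos := N.k_pos

/-- The nested sets `super_k` of a frame. -/
def superN (N : CRN d m) (P : Finset (Fin d)) {L : ℕ} (wbar : Fin L → Fin d → ℝ) : ℕ → Set (Fin m)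
  | 0 => N.RP P
  | (k+1) =>
    if h : k < L then
      {r | r ∈ N.superN P wbar k ∧ ∀ r' ∈ N.superN P wbar k,
        0 ≤ ∑ i, wbar ⟨k, h⟩ i * ((N.cin r i : ℝ) - (N.cin r' i : ℝ))}
    else N.superN P wbar k

/-- Species reachable in `k` steps starting from reactions with no inputs. -/
def reachSet (N : CRN d m) : ℕ → Set (Fin d)
  | 0 => ∅
  | (k+1) => N.reachSet k ∪
      {i | ∃ r, 0 < N.cout r i ∧ ∀ l, 0 < N.cin r l → l ∈ N.reachSet k}

/-- The Lagrangian `L(λ, ξ)`. -/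
def Lagr (N : CRN d m) (lamv : Fin m → ℝ) (ξ : Fin d → ℝ) : ℝ :=
  ⨆ θ : Fin d → ℝ, ((∑ i, θ i * ξ i) - ∑ r, lamv r * (Real.exp (∑ i, θ i * N.cvec r i) - 1))

end CRN

/-- A frame: an ordered orthonormal family supported on `P`. -/
structure Frame (d : ℕ) (P : Finset (Fin d)) (dstar : ℕ) where
  w : Fin dstar → Fin d → ℝ
  ortho : ∀ k l, dot (w k) (w l) = if k = l then 1 else 0
  suppP : ∀ k, ∀ i ∉ P, w k i = 0

/-- A `(v',P)`-divergent volume-jet framed by `F` and adapted to the network `N`. -/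
structure VolJet {d m : ℕ} (N : CRN d m) (P : Finset (Fin d)) {dstar : ℕ}
    (F : Frame d P dstar) (v' : ℝ → ℝ) where
  v : ℕ → ℝ
  θ : ℕ → ℝ
  w : ℕ → Fin d → ℝ
  θ_gt : ∀ j, 1 < θ j
  θ_top : Tendsto θ atTop atTop
  conic : ∀ j, ∃ a : Fin dstar → ℝ, (∀ k, 0 ≤ a k) ∧ ∀ i, w j i = ∑ k, a k * F.w k i
  unit : ∀ j, dot (w j) (w j) = 1
  beta_ratio : ∀ (k : ℕ) (hk : k + 1 < dstar),
    Tendsto (fun j => dot (w j) (F.w ⟨k + 1, hk⟩) / dot (w j) (F.w ⟨k, Nat.lt_of_succ_lt hk⟩))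
      atTop (nhds 0)
  adapted_sign : ∀ r ∈ N.RP P, N.OutIn P r →
    (∀ j, dot (w j) (N.cvec r) < 0) ∨ (∀ j, dot (w j) (N.cvec r) = 0) ∨
      (∀ j, 0 < dot (w j) (N.cvec r))
  adapted_theta : ∀ k : Fin dstar,
    (∃ L : ℝ, Tendsto (fun j => θ j ^ dot (w j) (F.w k)) atTop (nhds L)) ∨
      Tendsto (fun j => θ j ^ dot (w j) (F.w k)) atTop atTop
  vx_nat : ∀ j, ∀ i ∈ P, ∃ n : ℕ, 0 < n ∧ v j * θ j ^ (w j i) = n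
  v_big : ∀ j, v' (∑ i ∈ P, θ j ^ (w j i)) < v j
  x_div : Tendsto (fun j => ∑ i ∈ P, θ j ^ (w j i)) atTop atTop

/-- The spatial trajectory of a volume-jet. -/
def VolJet.x {d m : ℕ} {N : CRN d m} {P : Finset (Fin d)} {dstar : ℕ} {F : Frame d P dstar}
    {v' : ℝ → ℝ} (J : VolJet N P F v') (j : ℕ) : Fin d → ℝ :=
  fun i => if i ∈ P then J.θ j ^ (J.w j i) else 0

/-- Reachability sets for a polynomial system. -/
def polyReach (d : ℕ) (Q : Fin d → MvPolynomial (Fin d) ℝ) : ℕ → Set (Fin d)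
  | 0 => ∅
  | (k+1) => polyReach d Q k ∪
      {i | ∃ s : Fin d →₀ ℕ, 0 < MvPolynomial.coeff s (Q i) ∧ ∀ l, s l ≠ 0 → l ∈ polyReach d Q k}

lemma gronwall_aux {f f' : ℝ → ℝ}
    (hf : ∀ t ∈ Set.Icc (0:ℝ) 1, HasDerivWithinAt f (f' t) (Set.Icc 0 1) t)
    {A C : ℝ} (hA : 0 ≤ A) (hC : 0 ≤ C) {E : ℕ}
    (h0 : 0 ≤ f 0)
    (hlb : ∀ t ∈ Set.Icc (0:ℝ) 1, A * t ^ E - C * f t ≤ f' t) :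
    ∀ t ∈ Set.Icc (0:ℝ) 1, Real.exp (-C) * (A / (E + 1)) * t ^ (E + 1) ≤ f t := by
  set g : ℝ → ℝ := fun t => Real.exp (C * t) * f t - A / (E+1) * t ^ (E+1) with hgdef
  have hgd : ∀ t ∈ Set.Icc (0:ℝ) 1, HasDerivWithinAt g
      (Real.exp (C*t) * C * f t + Real.exp (C*t) * f' t - A / (E+1) * ((E+1) * t ^ E))
      (Set.Icc 0 1) t := by
    intro t ht
    have h1 : HasDerivAt (fun x => Real.exp (C * x)) (Real.exp (C * t) * C) t := by
      simpa using ((hasDerivAt_id t).const_mul C).exp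
    have h2 := (h1.hasDerivWithinAt.mul (hf t ht)).sub
      (((hasDerivAt_pow (E+1) t).hasDerivWithinAt).const_mul (A/(E+1)))
    refine h2.congr_deriv ?_
    rw [Nat.add_sub_cancel]
    push_cast
    ring
  have hmono : MonotoneOn g (Set.Icc 0 1) := by
    apply monotoneOn_of_hasDerivWithinAt_nonneg (convex_Icc 0 1)
      (fun t ht => (hgd t ht).continuousWithinAt)
      (fun t ht => ((hgd t (interior_subset ht)).mono interior_subset))
    intro t ht
    rw [interior_Icc] at ht
    have ht' : t ∈ Set.Icc (0:ℝ) 1 := Set.Ioo_subset_Icc_self ht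
    have h1 : Real.exp (C*t) * (A * t ^ E - C * f t) ≤ Real.exp (C*t) * f' t :=
      mul_le_mul_of_nonneg_left (hlb t ht') (Real.exp_pos _).le
    have hexp1 : 1 ≤ Real.exp (C*t) := Real.one_le_exp (mul_nonneg hC ht'.1)
    have hAt : 0 ≤ A * t ^ E := mul_nonneg hA (pow_nonneg ht'.1 E)
    have h2 : A * t ^ E ≤ Real.exp (C*t) * (A * t ^ E) := le_mul_of_one_le_left hAt hexp1
    have h3 : A / (E+1) * (((E:ℝ)+1) * t ^ E) = A * t ^ E := by
      field_simp
    rw [h3]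
    nlinarith [h1, h2]
  intro t ht
  have hg0 : g 0 = f 0 := by
    simp [hgdef, zero_pow (Nat.succ_ne_zero E)]
  have hmle : g 0 ≤ g t := hmono (Set.left_mem_Icc.2 zero_le_one) ht ht.1
  have hX : A/(E+1) * t^(E+1) ≤ Real.exp (C*t) * f t := by
    simp only [hgdef, mul_zero, Real.exp_zero, one_mul,
      zero_pow (Nat.succ_ne_zero E)] at hmle
    linarith
  have hXnn : 0 ≤ A/(E+1) * t^(E+1) :=
    mul_nonneg (div_nonneg hA (by positivity)) (pow_nonneg ht.1 _)
  have hft : 0 ≤ f t := by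
    nlinarith [Real.exp_pos (C*t), hX]
  have hec : Real.exp (C*t) ≤ Real.exp C := by
    apply Real.exp_le_exp.2
    nlinarith [ht.1, ht.2]
  have h4 : A/(E+1) * t^(E+1) ≤ Real.exp C * f t := by
    nlinarith [mul_le_mul_of_nonneg_right hec hft]
  rw [Real.exp_neg, mul_comm (Real.exp C)⁻¹ (A / (↑E + 1)), mul_assoc]
  have h5 : Real.exp C * (Real.exp C)⁻¹ = 1 := mul_inv_cancel₀ (Real.exp_ne_zero C)
  nlinarith [mul_le_mul_of_nonneg_right h4 (inv_nonneg.2 (Real.exp_pos C).le), h5]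


theorem stmt14' {d m : ℕ} (N : CRN d m) (hreach : ∃ K, ∀ i, i ∈ N.reachSet K) :
    ∀ ρ : ℝ, 0 < ρ → ∃ (D : ℕ) (b : ℝ), 0 < b ∧
      ∀ ζ : ℝ → Fin d → ℝ,
        (∀ t ∈ Set.Icc (0:ℝ) 1, ∀ i, 0 ≤ ζ t i) →
        (∀ t ∈ Set.Icc (0:ℝ) 1,
          HasDerivWithinAt ζ (fun i => ∑ r, N.lam r (ζ t) * N.cvec r i) (Set.Icc 0 1) t) →
        (∀ t ∈ Set.Icc (0:ℝ) 1, ∑ i, |ζ t i| ≤ ρ) →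
        ∀ t ∈ Set.Icc (0:ℝ) 1, ∀ i, b * t ^ D ≤ ζ t i := by
  intro ρ hρ
  classical
  set ρ' : ℝ := max ρ 1 with hρ'def
  have hρ'1 : 1 ≤ ρ' := le_max_right _ _
  have hρ'0 : 0 < ρ' := lt_of_lt_of_le one_pos hρ'1
  set Smax : ℕ := Finset.univ.sup (fun r : Fin m => ∑ l, N.cin r l) with hSdef
  set Nmax : ℕ := Finset.univ.sup
    (fun r : Fin m => Finset.univ.sup (fun i => N.cout r i + N.cin r i)) with hNdef
  set kmin : ℝ := ∏ r : Fin m, min (N.k r) 1 with hkdef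
  set CC : ℝ := (∑ r : Fin m, N.k r) * (ρ' ^ Smax * Nmax) with hCdef
  have hkmin_pos : 0 < kmin := Finset.prod_pos (fun r _ => lt_min (N.k_pos r) one_pos)
  have hkmin_le1 : kmin ≤ 1 :=
    Finset.prod_le_one (fun r _ => (lt_min (N.k_pos r) one_pos).le)
      (fun r _ => min_le_right _ _)
  have hkmin_le : ∀ r, kmin ≤ N.k r := by
    intro r
    have h1 : kmin = min (N.k r) 1 * ∏ x ∈ Finset.univ.erase r, min (N.k x) 1 :=
      (Finset.mul_prod_erase Finset.univ _ (Finset.mem_univ r)).symm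
    have h2 : ∏ x ∈ Finset.univ.erase r, min (N.k x) 1 ≤ 1 :=
      Finset.prod_le_one (fun x _ => (lt_min (N.k_pos x) one_pos).le)
        (fun x _ => min_le_right _ _)
    calc kmin ≤ min (N.k r) 1 * 1 := by
          rw [h1]; exact mul_le_mul_of_nonneg_left h2 (lt_min (N.k_pos r) one_pos).le
      _ ≤ N.k r := by rw [mul_one]; exact min_le_left _ _
  have hCC0 : 0 ≤ CC :=
    mul_nonneg (Finset.sum_nonneg fun r _ => (N.k_pos r).le)
      (mul_nonneg (pow_nonneg hρ'0.le _) (Nat.cast_nonneg _))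
  have hlam_nonneg : ∀ r (x : Fin d → ℝ), (∀ l, 0 ≤ x l) → 0 ≤ N.lam r x := fun r x hx =>
    mul_nonneg (N.k_pos r).le (Finset.prod_nonneg fun l _ => pow_nonneg (hx l) _)
  have hlam_ub : ∀ (x : Fin d → ℝ), (∀ l, 0 ≤ x l) → (∀ l, x l ≤ ρ') →
      ∀ i r, 0 < N.cin r i → N.lam r x ≤ N.k r * (ρ' ^ Smax * x i) := by
    intro x hx hx' i r hri
    have hprod : ∏ l, x l ^ N.cin r l ≤ ρ' ^ Smax * x i := by
      have hsplit : ∏ l, x l ^ N.cin r l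
          = x i ^ N.cin r i * ∏ l ∈ Finset.univ.erase i, x l ^ N.cin r l :=
        (Finset.mul_prod_erase Finset.univ _ (Finset.mem_univ i)).symm
      have hxi : x i ^ N.cin r i ≤ ρ' ^ (N.cin r i - 1) * x i := by
        conv_lhs => rw [← Nat.succ_pred_eq_of_pos hri]
        rw [pow_succ]
        exact mul_le_mul_of_nonneg_right (pow_le_pow_left₀ (hx i) (hx' i) _) (hx i)
      have hrest : ∏ l ∈ Finset.univ.erase i, x l ^ N.cin r l
          ≤ ρ' ^ (∑ l ∈ Finset.univ.erase i, N.cin r l) := by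
        rw [← Finset.prod_pow_eq_pow_sum]
        exact Finset.prod_le_prod (fun l _ => pow_nonneg (hx l) _)
          (fun l _ => pow_le_pow_left₀ (hx l) (hx' l) _)
      have hrest0 : 0 ≤ ∏ l ∈ Finset.univ.erase i, x l ^ N.cin r l :=
        Finset.prod_nonneg fun l _ => pow_nonneg (hx l) _
      calc ∏ l, x l ^ N.cin r l
          ≤ (ρ' ^ (N.cin r i - 1) * x i) * ρ' ^ (∑ l ∈ Finset.univ.erase i, N.cin r l) := by
            rw [hsplit]
            exact mul_le_mul hxi hrest hrest0
              (mul_nonneg (pow_nonneg hρ'0.le _) (hx i))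
        _ = ρ' ^ ((N.cin r i - 1) + ∑ l ∈ Finset.univ.erase i, N.cin r l) * x i := by
            rw [pow_add]; ring
        _ ≤ ρ' ^ Smax * x i := by
            apply mul_le_mul_of_nonneg_right _ (hx i)
            apply pow_le_pow_right₀ hρ'1
            calc (N.cin r i - 1) + ∑ l ∈ Finset.univ.erase i, N.cin r l
                ≤ N.cin r i + ∑ l ∈ Finset.univ.erase i, N.cin r l :=
                  Nat.add_le_add_right (Nat.sub_le _ _) _
              _ = ∑ l, N.cin r l := Finset.add_sum_erase _ _ (Finset.mem_univ i)
              _ ≤ Smax := Finset.le_sup (f := fun r : Fin m => ∑ l, N.cin r l) (Finset.mem_univ r)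
    exact mul_le_mul_of_nonneg_left hprod (N.k_pos r).le
  have hcvec_abs : ∀ r i, |N.cvec r i| ≤ (Nmax : ℝ) := by
    intro r i
    have h1 : N.cout r i + N.cin r i ≤ Nmax :=
      le_trans (Finset.le_sup (f := fun i => N.cout r i + N.cin r i) (Finset.mem_univ i))
        (Finset.le_sup (f := fun r : Fin m => Finset.univ.sup (fun i => N.cout r i + N.cin r i))
          (Finset.mem_univ r))
    have h2 : ((N.cout r i + N.cin r i : ℕ) : ℝ) ≤ (Nmax : ℝ) := Nat.cast_le.2 h1
    push_cast at h2
    have hc1 : (0:ℝ) ≤ (N.cout r i : ℝ) := Nat.cast_nonneg _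
    have hc2 : (0:ℝ) ≤ (N.cin r i : ℝ) := Nat.cast_nonneg _
    rw [CRN.cvec, abs_le]
    constructor <;> linarith
  have key : ∀ (x : Fin d → ℝ), (∀ l, 0 ≤ x l) → (∀ l, x l ≤ ρ') → ∀ i (r0 : Fin m),
      N.cin r0 i = 0 → N.lam r0 x * N.cvec r0 i - CC * x i ≤ ∑ r, N.lam r x * N.cvec r i := by
    intro x hx hx' i r0 h0
    have hsplit : ∑ r, N.lam r x * N.cvec r i
        = (∑ r ∈ Finset.univ.filter (fun r => N.cin r i = 0), N.lam r x * N.cvec r i)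
          + ∑ r ∈ Finset.univ.filter (fun r => ¬ N.cin r i = 0), N.lam r x * N.cvec r i :=
      (Finset.sum_filter_add_sum_filter_not _ _ _).symm
    have h1 : N.lam r0 x * N.cvec r0 i
        ≤ ∑ r ∈ Finset.univ.filter (fun r => N.cin r i = 0), N.lam r x * N.cvec r i := by
      apply Finset.single_le_sum (f := fun r => N.lam r x * N.cvec r i)
      · intro r hr
        simp only [Finset.mem_filter] at hr
        have hc : N.cvec r i = N.cout r i := by simp [CRN.cvec, hr.2]
        rw [hc]
        exact mul_nonneg (hlam_nonneg r x hx) (Nat.cast_nonneg _)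
      · simp [h0]
    have h2 : -(CC * x i)
        ≤ ∑ r ∈ Finset.univ.filter (fun r => ¬ N.cin r i = 0), N.lam r x * N.cvec r i := by
      have hterm : ∀ r ∈ Finset.univ.filter (fun r => ¬ N.cin r i = 0),
          -(N.k r * (ρ' ^ Smax * Nmax * x i)) ≤ N.lam r x * N.cvec r i := by
        intro r hr
        simp only [Finset.mem_filter] at hr
        have hpos : 0 < N.cin r i := Nat.pos_of_ne_zero hr.2
        have hub := hlam_ub x hx hx' i r hpos
        have habs : |N.lam r x * N.cvec r i| ≤ N.k r * (ρ' ^ Smax * Nmax * x i) := by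
          rw [abs_mul, abs_of_nonneg (hlam_nonneg r x hx)]
          calc N.lam r x * |N.cvec r i| ≤ (N.k r * (ρ' ^ Smax * x i)) * Nmax :=
                mul_le_mul hub (hcvec_abs r i) (abs_nonneg _)
                  (mul_nonneg (N.k_pos r).le (mul_nonneg (pow_nonneg hρ'0.le _) (hx i)))
            _ = N.k r * (ρ' ^ Smax * Nmax * x i) := by ring
        linarith [neg_abs_le (N.lam r x * N.cvec r i)]
      have hsub : ∑ r ∈ Finset.univ.filter (fun r => ¬ N.cin r i = 0),
            N.k r * (ρ' ^ Smax * Nmax * x i) ≤ ∑ r : Fin m, N.k r * (ρ' ^ Smax * Nmax * x i) := by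
        apply Finset.sum_le_sum_of_subset_of_nonneg (Finset.filter_subset _ _)
        intro r _ _
        exact mul_nonneg (N.k_pos r).le
          (mul_nonneg (mul_nonneg (pow_nonneg hρ'0.le _) (Nat.cast_nonneg _)) (hx i))
      have heq : ∑ r : Fin m, N.k r * (ρ' ^ Smax * Nmax * x i) = CC * x i := by
        rw [← Finset.sum_mul, hCdef]; ring
      calc -(CC * x i) ≤ -(∑ r ∈ Finset.univ.filter (fun r => ¬ N.cin r i = 0),
              N.k r * (ρ' ^ Smax * Nmax * x i)) := by rw [← heq]; linarith
        _ = ∑ r ∈ Finset.univ.filter (fun r => ¬ N.cin r i = 0),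
              -(N.k r * (ρ' ^ Smax * Nmax * x i)) := by
            rw [← Finset.sum_neg_distrib]
        _ ≤ _ := Finset.sum_le_sum hterm
    rw [hsplit]
    linarith
  have main : ∀ K : ℕ, ∃ (D : ℕ) (b : ℝ), 0 < b ∧ b ≤ 1 ∧
      ∀ ζ : ℝ → Fin d → ℝ,
        (∀ t ∈ Set.Icc (0:ℝ) 1, ∀ i, 0 ≤ ζ t i) →
        (∀ t ∈ Set.Icc (0:ℝ) 1,
          HasDerivWithinAt ζ (fun i => ∑ r, N.lam r (ζ t) * N.cvec r i) (Set.Icc 0 1) t) →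
        (∀ t ∈ Set.Icc (0:ℝ) 1, ∑ i, |ζ t i| ≤ ρ) →
        ∀ t ∈ Set.Icc (0:ℝ) 1, ∀ i ∈ N.reachSet K, b * t ^ D ≤ ζ t i := by
    intro K
    induction K with
    | zero =>
      exact ⟨0, 1, one_pos, le_refl 1, fun ζ _ _ _ t _ i hi =>
        absurd hi (Set.notMem_empty i)⟩
    | succ k ih =>
      obtain ⟨D, b, hb, hb1, IH⟩ := ih
      set b' : ℝ := min b (Real.exp (-CC) * (kmin * b ^ Smax / ((D * Smax : ℕ) + 1)))
        with hb'def
      have hb'pos : 0 < b' := lt_min hb (by positivity)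
      have hb'b : b' ≤ b := min_le_left _ _
      refine ⟨D * Smax + D + 1, b', hb'pos, le_trans hb'b hb1, ?_⟩
      intro ζ hpos hder hsum t ht i hi
      have hζub : ∀ s ∈ Set.Icc (0:ℝ) 1, ∀ l, ζ s l ≤ ρ' := by
        intro s hs l
        have h2 : |ζ s l| ≤ ∑ j, |ζ s j| :=
          Finset.single_le_sum (f := fun j => |ζ s j|) (fun j _ => abs_nonneg _)
            (Finset.mem_univ l)
        exact le_trans (le_trans (le_abs_self _) h2)
          (le_trans (hsum s hs) (le_max_left _ _))
      have hold : ∀ s ∈ Set.Icc (0:ℝ) 1, ∀ j ∈ N.reachSet k,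
          b' * s ^ (D * Smax + D + 1) ≤ ζ s j := by
        intro s hs j hj
        have h1 := IH ζ hpos hder hsum s hs j hj
        have h2 : s ^ (D * Smax + D + 1) ≤ s ^ D :=
          pow_le_pow_of_le_one hs.1 hs.2 (by omega)
        calc b' * s ^ (D * Smax + D + 1) ≤ b * s ^ D :=
              mul_le_mul hb'b h2 (pow_nonneg hs.1 _) hb.le
          _ ≤ ζ s j := h1
      simp only [CRN.reachSet] at hi
      rcases hi with hi | hi
      · exact hold t ht i hi
      · obtain ⟨r0, hout, hin⟩ := hi
        by_cases hci : 0 < N.cin r0 i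
        · exact hold t ht i (hin i hci)
        have hci0 : N.cin r0 i = 0 := Nat.eq_zero_of_not_pos hci
        have hderi : ∀ s ∈ Set.Icc (0:ℝ) 1,
            HasDerivWithinAt (fun u => ζ u i) (∑ r, N.lam r (ζ s) * N.cvec r i)
              (Set.Icc 0 1) s :=
          fun s hs => (hasDerivWithinAt_pi.1 (hder s hs)) i
        have hlb : ∀ s ∈ Set.Icc (0:ℝ) 1,
            (kmin * b ^ Smax) * s ^ (D * Smax) - CC * ζ s i
              ≤ ∑ r, N.lam r (ζ s) * N.cvec r i := by
          intro s hs
          have hk := key (ζ s) (hpos s hs) (hζub s hs) i r0 hci0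
          have hbs1 : 0 ≤ b * s ^ D := mul_nonneg hb.le (pow_nonneg hs.1 _)
          have hbs2 : b * s ^ D ≤ 1 := by
            have h3 : s ^ D ≤ 1 := pow_le_one₀ hs.1 hs.2
            nlinarith
          have hlam_lb : kmin * b ^ Smax * s ^ (D * Smax) ≤ N.lam r0 (ζ s) := by
            have hp1 : ∏ l, (b * s ^ D) ^ N.cin r0 l ≤ ∏ l, ζ s l ^ N.cin r0 l := by
              apply Finset.prod_le_prod (fun l _ => pow_nonneg hbs1 _)
              intro l _
              rcases Nat.eq_zero_or_pos (N.cin r0 l) with h | h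
              · simp [h]
              · exact pow_le_pow_left₀ hbs1 (IH ζ hpos hder hsum s hs l (hin l h)) _
            have hp2 : (b * s ^ D) ^ Smax ≤ ∏ l, (b * s ^ D) ^ N.cin r0 l := by
              rw [Finset.prod_pow_eq_pow_sum]
              exact pow_le_pow_of_le_one hbs1 hbs2
                (Finset.le_sup (f := fun r : Fin m => ∑ l, N.cin r l) (Finset.mem_univ r0))
            have hp3 : (b * s ^ D) ^ Smax = b ^ Smax * s ^ (D * Smax) := by
              rw [mul_pow, ← pow_mul]
            calc kmin * b ^ Smax * s ^ (D * Smax) = kmin * ((b * s ^ D) ^ Smax) := by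
                  rw [hp3]; ring
              _ ≤ N.k r0 * ∏ l, ζ s l ^ N.cin r0 l :=
                  mul_le_mul (hkmin_le r0) (le_trans hp2 hp1) (pow_nonneg hbs1 _)
                    (N.k_pos r0).le
              _ = N.lam r0 (ζ s) := rfl
          have hcv : (1:ℝ) ≤ N.cvec r0 i := by
            rw [CRN.cvec, hci0]
            push_cast
            rw [sub_zero]
            exact_mod_cast hout
          have h5 : kmin * b ^ Smax * s ^ (D * Smax) ≤ N.lam r0 (ζ s) * N.cvec r0 i :=
            calc kmin * b ^ Smax * s ^ (D * Smax) ≤ N.lam r0 (ζ s) := hlam_lb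
              _ = N.lam r0 (ζ s) * 1 := (mul_one _).symm
              _ ≤ N.lam r0 (ζ s) * N.cvec r0 i :=
                  mul_le_mul_of_nonneg_left hcv (hlam_nonneg r0 (ζ s) (hpos s hs))
          linarith
        have hg := gronwall_aux hderi (A := kmin * b ^ Smax) (C := CC)
          (by positivity) hCC0 (E := D * Smax)
          (hpos 0 (Set.left_mem_Icc.2 zero_le_one) i) hlb t ht
        have hb'le : b' ≤ Real.exp (-CC) * (kmin * b ^ Smax / ((D * Smax : ℕ) + 1)) :=
          min_le_right _ _
        have hpow : t ^ (D * Smax + D + 1) ≤ t ^ (D * Smax + 1) :=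
          pow_le_pow_of_le_one ht.1 ht.2 (by omega)
        calc b' * t ^ (D * Smax + D + 1)
            ≤ (Real.exp (-CC) * (kmin * b ^ Smax / ((D * Smax : ℕ) + 1)))
                * t ^ (D * Smax + 1) :=
              mul_le_mul hb'le hpow (pow_nonneg ht.1 _) (by positivity)
          _ ≤ ζ t i := hg
  obtain ⟨K, hK⟩ := hreach
  obtain ⟨D, b, hb, _, h⟩ := main K
  exact ⟨D, b, hb, fun ζ h1 h2 h3 t ht i => h ζ h1 h2 h3 t ht i (hK i)⟩


theorem stmt14 {d m : ℕ} (N : CRN d m) (hreach : ∃ K, ∀ i, i ∈ N.reachSet K) :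
    ∀ ρ : ℝ, 0 < ρ → ∃ (D : ℕ) (b : ℝ), 0 < b ∧
      ∀ ζ : ℝ → Fin d → ℝ,
        (∀ t ∈ Set.Icc (0:ℝ) 1, ∀ i, 0 ≤ ζ t i) →
        (∀ t ∈ Set.Icc (0:ℝ) 1,
          HasDerivWithinAt ζ (fun i => ∑ r, N.lam r (ζ t) * N.cvec r i) (Set.Icc 0 1) t) →
        (∀ t ∈ Set.Icc (0:ℝ) 1, ∑ i, |ζ t i| ≤ ρ) →
        ∀ t ∈ Set.Icc (0:ℝ) 1, ∀ i, b * t ^ D ≤ ζ t i :=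
  stmt14' N hreach

end
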